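/- Let n ≥ 1 and let 𝒜 be a nonempty family of subsets of [n]. If each weight ω(i) for i ∈ [n] is chosen uniformly and independently at random from {1, …, 2n}, then with probability at least 1/2 there is a unique set S ∈ 𝒜 minimizing ω(S) = ∑_{i ∈ S} ω(i). -/

import Mathlib

open Finset

/-- total weight of a set -/
def isoWgt {n : ℕ} (ω : Fin n → Fin (2 * n)) (S : Finset (Fin n)) : ℕ :=
  ∑ i ∈ S, ((ω i : ℕ) + 1)

/-- `i` is singular for `ω`: some min-weight set contains `i` and some avoids it. -/
def isoSing {n : ℕ} (𝒜 : Finset (Finset (Fin n))) (i : Fin n)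
    (ω : Fin n → Fin (2 * n)) : Prop :=
  (∃ S ∈ 𝒜, i ∈ S ∧ ∀ T ∈ 𝒜, isoWgt ω S ≤ isoWgt ω T) ∧
  (∃ S ∈ 𝒜, i ∉ S ∧ ∀ T ∈ 𝒜, isoWgt ω S ≤ isoWgt ω T)

lemma isoWgt_congr {n : ℕ} {ω₁ ω₂ : Fin n → Fin (2 * n)} {i : Fin n}
    (h : ∀ j, j ≠ i → ω₁ j = ω₂ j) {S : Finset (Fin n)} (hS : i ∉ S) :
    isoWgt ω₁ S = isoWgt ω₂ S := by
  refine Finset.sum_congr rfl fun j hj => ?_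
  rw [h j (fun e => hS (e ▸ hj))]

lemma isoWgt_eq_add {n : ℕ} {ω : Fin n → Fin (2 * n)} {i : Fin n} {S : Finset (Fin n)}
    (hS : i ∈ S) :
    isoWgt ω S = ((ω i : ℕ) + 1) + isoWgt ω (S.erase i) :=
  (Finset.add_sum_erase S _ hS).symm

/-- key injectivity: if `i` is singular for two weight vectors agreeing off `i`,
they agree at `i` too. -/
lemma isoSing_inj {n : ℕ} {𝒜 : Finset (Finset (Fin n))} {i : Fin n}
    {ω₁ ω₂ : Fin n → Fin (2 * n)}
    (h1 : isoSing 𝒜 i ω₁) (h2 : isoSing 𝒜 i ω₂)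
    (hag : ∀ j, j ≠ i → ω₁ j = ω₂ j) : ω₁ i = ω₂ i := by
  obtain ⟨⟨S₁, hS₁, hiS₁, hmS₁⟩, ⟨T₁, hT₁, hiT₁, hmT₁⟩⟩ := h1
  obtain ⟨⟨S₂, hS₂, hiS₂, hmS₂⟩, ⟨T₂, hT₂, hiT₂, hmT₂⟩⟩ := h2
  have hag' : ∀ j, j ≠ i → ω₂ j = ω₁ j := fun j hj => (hag j hj).symm
  have hm : isoWgt ω₁ T₁ = isoWgt ω₂ T₂ := by
    apply le_antisymm
    · calc isoWgt ω₁ T₁ ≤ isoWgt ω₁ T₂ := hmT₁ T₂ hT₂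
        _ = isoWgt ω₂ T₂ := isoWgt_congr hag hiT₂
    · calc isoWgt ω₂ T₂ ≤ isoWgt ω₂ T₁ := hmT₂ T₁ hT₁
        _ = isoWgt ω₁ T₁ := isoWgt_congr hag' hiT₁
  have h12 : (ω₁ i : ℕ) ≤ ω₂ i := by
    have h : isoWgt ω₁ S₁ ≤ isoWgt ω₂ S₁ :=
      calc isoWgt ω₁ S₁ ≤ isoWgt ω₁ T₁ := hmS₁ T₁ hT₁
        _ = isoWgt ω₂ T₂ := hm
        _ ≤ isoWgt ω₂ S₁ := hmT₂ S₁ hS₁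
    rw [isoWgt_eq_add hiS₁, isoWgt_eq_add hiS₁,
      isoWgt_congr hag' (Finset.notMem_erase i S₁)] at h
    omega
  have h21 : (ω₂ i : ℕ) ≤ ω₁ i := by
    have h : isoWgt ω₂ S₂ ≤ isoWgt ω₁ S₂ :=
      calc isoWgt ω₂ S₂ ≤ isoWgt ω₂ T₂ := hmS₂ T₂ hT₂
        _ = isoWgt ω₁ T₁ := hm.symm
        _ ≤ isoWgt ω₁ S₂ := hmT₁ S₂ hS₂
    rw [isoWgt_eq_add hiS₂, isoWgt_eq_add hiS₂,
      isoWgt_congr hag (Finset.notMem_erase i S₂)] at h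
    omega
  exact Fin.ext (le_antisymm h12 h21)

open Classical in
/-- Isolation Lemma (Mulmuley–Vazirani–Vazirani): if each weight `ω(i)` is chosen
uniformly and independently from `{1, …, 2n}`, then with probability at least `1/2`
there is a unique set in the nonempty family `𝒜` of minimum total weight. -/
theorem isolation_lemma (n : ℕ) (hn : 1 ≤ n) (𝒜 : Finset (Finset (Fin n)))
    (h𝒜 : 𝒜.Nonempty) :
    Fintype.card (Fin n → Fin (2 * n)) ≤
      2 * (Finset.univ.filter (fun ω : Fin n → Fin (2 * n) =>
        ∃! S, S ∈ 𝒜 ∧ ∀ T ∈ 𝒜,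
          ∑ i ∈ S, ((ω i : ℕ) + 1) ≤ ∑ i ∈ T, ((ω i : ℕ) + 1))).card := by
  classical
  set P : (Fin n → Fin (2 * n)) → Prop := fun ω =>
    ∃! S, S ∈ 𝒜 ∧ ∀ T ∈ 𝒜,
      ∑ i ∈ S, ((ω i : ℕ) + 1) ≤ ∑ i ∈ T, ((ω i : ℕ) + 1) with hPdef
  -- every "bad" ω has a singular element
  have hbad : ∀ ω : Fin n → Fin (2 * n), ¬ P ω → ∃ i, isoSing 𝒜 i ω := by
    intro ω hne
    obtain ⟨S, hS, hmin⟩ := Finset.exists_min_image 𝒜 (isoWgt ω) h𝒜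
    have hex : ∃ T, (T ∈ 𝒜 ∧ ∀ U ∈ 𝒜, isoWgt ω T ≤ isoWgt ω U) ∧ T ≠ S := by
      by_contra hc
      push_neg at hc
      exact hne ⟨S, ⟨hS, hmin⟩, fun T hT => hc T hT⟩
    obtain ⟨T, ⟨hT, hminT⟩, hTS⟩ := hex
    have hdiff : ∃ i, (i ∈ S ∧ i ∉ T) ∨ (i ∈ T ∧ i ∉ S) := by
      by_contra hc
      push_neg at hc
      exact hTS (Finset.ext fun i => ⟨fun h => (hc i).2 h, fun h => (hc i).1 h⟩)
    obtain ⟨i, hi⟩ := hdiff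
    rcases hi with ⟨hiS, hiT⟩ | ⟨hiT, hiS⟩
    · exact ⟨i, ⟨S, hS, hiS, hmin⟩, ⟨T, hT, hiT, hminT⟩⟩
    · exact ⟨i, ⟨T, hT, hiT, hminT⟩, ⟨S, hS, hiS, hmin⟩⟩
  -- counting singular vectors at each coordinate
  have key : ∀ i : Fin n,
      (univ.filter (fun ω : Fin n → Fin (2 * n) => isoSing 𝒜 i ω)).card ≤
        (2 * n) ^ (n - 1) := by
    intro i
    have hc : (univ : Finset ({j : Fin n // j ≠ i} → Fin (2 * n))).card =
        (2 * n) ^ (n - 1) := by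
      rw [Finset.card_univ, Fintype.card_fun, Fintype.card_fin]
      congr 1
      rw [Fintype.card_subtype_compl, Fintype.card_fin, Fintype.card_subtype_eq]
    rw [← hc]
    apply Finset.card_le_card_of_injOn
      (fun ω (j : {j : Fin n // j ≠ i}) => ω j.1)
    · intro ω _; exact mem_univ _
    · intro ω₁ h₁ ω₂ h₂ he
      simp only [Finset.coe_filter, Set.mem_setOf_eq, mem_univ, true_and] at h₁ h₂
      funext j
      by_cases hj : j = i
      · subst hj
        exact isoSing_inj h₁ h₂ (fun k hk => congrFun he ⟨k, hk⟩)
      · exact congrFun he ⟨j, hj⟩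
  -- union bound
  have hB : (univ.filter (fun ω : Fin n → Fin (2 * n) => ¬ P ω)).card ≤
      n * (2 * n) ^ (n - 1) := by
    calc (univ.filter (fun ω : Fin n → Fin (2 * n) => ¬ P ω)).card
        ≤ ((univ : Finset (Fin n)).biUnion fun i =>
            univ.filter (fun ω : Fin n → Fin (2 * n) => isoSing 𝒜 i ω)).card := by
          apply Finset.card_le_card
          intro ω hω
          rw [mem_filter] at hω
          obtain ⟨i, hi⟩ := hbad ω hω.2
          exact Finset.mem_biUnion.2 ⟨i, mem_univ i, mem_filter.2 ⟨mem_univ ω, hi⟩⟩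
      _ ≤ ∑ i : Fin n,
            (univ.filter (fun ω : Fin n → Fin (2 * n) => isoSing 𝒜 i ω)).card :=
          Finset.card_biUnion_le
      _ ≤ ∑ _i : Fin n, (2 * n) ^ (n - 1) :=
          Finset.sum_le_sum fun i _ => key i
      _ = n * (2 * n) ^ (n - 1) := by simp [mul_comm]
  have hsplit : (univ.filter (fun ω : Fin n → Fin (2 * n) => P ω)).card +
      (univ.filter (fun ω : Fin n → Fin (2 * n) => ¬ P ω)).card =
      Fintype.card (Fin n → Fin (2 * n)) := by
    rw [Finset.card_filter_add_card_filter_not, Finset.card_univ]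
  have hN : Fintype.card (Fin n → Fin (2 * n)) = 2 * (n * (2 * n) ^ (n - 1)) := by
    obtain ⟨m, rfl⟩ : ∃ m, n = m + 1 := ⟨n - 1, by omega⟩
    simp only [Fintype.card_fun, Fintype.card_fin, Nat.add_sub_cancel, pow_succ]
    ring
  have hgoal : (univ.filter (fun ω : Fin n → Fin (2 * n) => P ω)).card =
      (Finset.univ.filter (fun ω : Fin n → Fin (2 * n) =>
        ∃! S, S ∈ 𝒜 ∧ ∀ T ∈ 𝒜,
          ∑ i ∈ S, ((ω i : ℕ) + 1) ≤ ∑ i ∈ T, ((ω i : ℕ) + 1))).card := rfl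
  rw [← hgoal]
  clear hbad key hgoal hPdef
  omega
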